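/- Let x_1, …, x_m be unit vectors in ℝ^d with |x_i·x_j| ≤ √(2·log(2m²/δ)/d) for all i ≠ j, for some δ ∈ (0,1), let y_i ∈ {−1,+1}, and assume d ≥ 32·m⁴·n²·log(2m²/δ). Let θ = (w_j, b_j)_{j=1}^n be a KKT point (with multipliers λ_i) of the margin-maximization problem for the fixed-output-weight network, and suppose ∑_{j=1}^{n/2} b_j − ∑_{j=n/2+1}^{n} b_j ≤ 1/4. Then λ_i ≥ 1/(4n) for every i with y_i = +1. -/

import Mathlib

/-- ReLU. -/
noncomputable def relu (z : ℝ) : ℝ := max z 0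

/-- Fixed output weights: +1 for the first n/2 neurons, -1 for the rest. -/
def vsign (n : ℕ) (j : Fin n) : ℝ := if (j : ℕ) < n / 2 then 1 else -1

/-- 2-layer ReLU network on ℝ^d with fixed output weights ±1. -/
noncomputable def netF {d n : ℕ} (w : Fin n → EuclideanSpace ℝ (Fin d)) (b : Fin n → ℝ)
    (x : EuclideanSpace ℝ (Fin d)) : ℝ :=
  ∑ j, vsign n j * relu ((inner ℝ (w j) x : ℝ) + b j)

/-- KKT point (with multipliers `lam`) of the margin-maximization problem for the
fixed-output-weight network. -/
def IsKKTFixWith {d m n : ℕ} (x : Fin m → EuclideanSpace ℝ (Fin d)) (y : Fin m → ℝ)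
    (w : Fin n → EuclideanSpace ℝ (Fin d)) (b : Fin n → ℝ) (lam : Fin m → ℝ) : Prop :=
  (∀ i, 1 ≤ y i * netF w b (x i)) ∧
  (∀ i, 0 ≤ lam i) ∧
  ∃ s : Fin m → Fin n → ℝ,
    (∀ i j, s i j ∈ Set.Icc (0 : ℝ) 1) ∧
    (∀ i j, 0 < (inner ℝ (w j) (x i) : ℝ) + b j → s i j = 1) ∧
    (∀ i j, (inner ℝ (w j) (x i) : ℝ) + b j < 0 → s i j = 0) ∧
    (∀ j, w j = vsign n j • ∑ i, (lam i * y i * s i j) • x i) ∧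
    (∀ j, b j = vsign n j * ∑ i, lam i * y i * s i j) ∧
    (∀ i, lam i * (y i * netF w b (x i) - 1) = 0)

open Finset

set_option maxHeartbeats 2000000 in
theorem key16 {m n : ℕ} (ε : ℝ) (hε : 0 ≤ ε)
    (y : Fin m → ℝ) (lam : Fin m → ℝ) (v : Fin n → ℝ)
    (s : Fin m → Fin n → ℝ) (g : Fin m → Fin m → ℝ)
    (c : Fin n → ℝ) (dd : Fin m → Fin n → ℝ)
    (hy : ∀ k, y k = 1 ∨ y k = -1)
    (hlam : ∀ k, 0 ≤ lam k)
    (hv : ∀ j, v j = 1 ∨ v j = -1)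
    (hs0 : ∀ k j, 0 ≤ s k j) (hs1 : ∀ k j, s k j ≤ 1)
    (hg1 : ∀ k, g k k = 1) (hge : ∀ k l, k ≠ l → |g k l| ≤ ε)
    (hc : ∀ j, c j = ∑ k, lam k * y k * s k j)
    (hdd : ∀ i j, dd i j = ∑ k, lam k * y k * s k j * g k i)
    (hεb : ε * (4 * (m : ℝ) ^ 2 * n) ≤ 1)
    (hact1 : ∀ i j, 0 < v j * (c j + dd i j) → s i j = 1)
    (hact0 : ∀ i j, v j * (c j + dd i j) < 0 → s i j = 0)
    (hmarg : ∀ i, 1 ≤ y i * ∑ j, s i j * (c j + dd i j))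
    (heq : ∀ i, 0 < lam i → y i * ∑ j, s i j * (c j + dd i j) = 1)
    (hbias : ∑ j, c j ≤ 1 / 4)
    (i : Fin m) (hyi : y i = 1) (hn : 1 ≤ n) :
    1 / (4 * (n : ℝ)) ≤ lam i := by
  -- basic facts
  have hm1 : (1:ℝ) ≤ m := by exact_mod_cast Nat.one_le_iff_ne_zero.mpr (by rintro rfl; exact i.elim0)
  have hn1 : (1:ℝ) ≤ n := by exact_mod_cast hn
  have hy2 : ∀ k, y k * y k = 1 := by intro k; rcases hy k with h | h <;> rw [h] <;> norm_num
  have hyabs : ∀ k, |y k| = 1 := by intro k; rcases hy k with h | h <;> rw [h] <;> norm_num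
  have hvabs : ∀ j, |v j| = 1 := by intro j; rcases hv j with h | h <;> rw [h] <;> norm_num
  -- rho, S, T
  set ρ : Fin n → ℝ := fun j => ∑ k, lam k * s k j with hρ
  have hρ0 : ∀ j, 0 ≤ ρ j := by
    intro j; exact Finset.sum_nonneg fun k _ => mul_nonneg (hlam k) (hs0 k j)
  set S : ℝ := ∑ j, ρ j with hS
  have hS0 : 0 ≤ S := Finset.sum_nonneg fun j _ => hρ0 j
  set T : ℝ := ε * S with hT
  have hT0 : 0 ≤ T := mul_nonneg hε hS0
  -- error terms
  set e : Fin m → Fin n → ℝ := fun i' j => dd i' j - lam i' * y i' * s i' j with he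
  have hεm : ε * (m:ℝ) ≤ 1/4 := by
    have h0m : (0:ℝ) ≤ m := by linarith
    have hmn : 1 ≤ (m:ℝ) * n := by nlinarith
    have hh : 0 ≤ ε * (m:ℝ) * ((m:ℝ)*n - 1) := mul_nonneg (mul_nonneg hε h0m) (by linarith)
    nlinarith [hεb]
  have hsub : ∀ i' j, |e i' j| ≤ ε * ρ j := by
    intro i' j
    have hsplit : ∑ k, lam k * y k * s k j * g k i'
        = lam i' * y i' * s i' j * g i' i' + ∑ k ∈ univ.erase i', lam k * y k * s k j * g k i' :=
      (Finset.add_sum_erase _ _ (mem_univ i')).symm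
    have he' : e i' j = ∑ k ∈ univ.erase i', lam k * y k * s k j * g k i' := by
      simp only [he, hdd, hsplit, hg1, mul_one]; ring
    rw [he']
    calc |∑ k ∈ univ.erase i', lam k * y k * s k j * g k i'|
        ≤ ∑ k ∈ univ.erase i', |lam k * y k * s k j * g k i'| := Finset.abs_sum_le_sum_abs _ _
      _ ≤ ∑ k ∈ univ.erase i', ε * (lam k * s k j) := by
          apply Finset.sum_le_sum
          intro k hk
          have hkne : k ≠ i' := Finset.ne_of_mem_erase hk
          rw [abs_mul, abs_mul, abs_mul, hyabs k, abs_of_nonneg (hlam k), abs_of_nonneg (hs0 k j)]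
          have := hge k i' hkne
          nlinarith [abs_nonneg (g k i'), mul_nonneg (hlam k) (hs0 k j)]
      _ ≤ ∑ k, ε * (lam k * s k j) := by
          apply Finset.sum_le_sum_of_subset_of_nonneg (Finset.subset_univ _)
          intro k _ _
          exact mul_nonneg hε (mul_nonneg (hlam k) (hs0 k j))
      _ = ε * ρ j := by rw [hρ]; rw [Finset.mul_sum]
  have heT : ∀ i', ∑ j, |e i' j| ≤ T := by
    intro i'
    calc ∑ j, |e i' j| ≤ ∑ j, ε * ρ j := Finset.sum_le_sum fun j _ => hsub i' j
      _ = T := by rw [hT, hS, Finset.mul_sum]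
  have hdde : ∀ i' j, dd i' j = lam i' * y i' * s i' j + e i' j := by
    intro i' j; simp [he]
  -- L1 : sign of biases
  have hcv : ∀ j, 0 ≤ v j * c j := by
    intro j
    by_contra h'
    push_neg at h'
    have hterm : ∀ k, (1 - v j * y k) * (lam k * s k j) ≤ 2 * (ε * ρ j) := by
      intro k
      have hρε : 0 ≤ ε * ρ j := mul_nonneg hε (hρ0 j)
      have hopp : v j * y k = 1 ∨ v j * y k = -1 := by
        rcases hv j with h1 | h1 <;> rcases hy k with h2 | h2 <;> rw [h1, h2] <;> norm_num
      rcases hopp with hsame | hopp'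
      · rw [hsame]; simp; linarith
      · rw [hopp']
        have hls : lam k * s k j ≤ ε * ρ j := by
          rcases eq_or_lt_of_le (hs0 k j) with hz | hz
          · rw [← hz]; simpa using hρε
          · have hsne : s k j ≠ 0 := by linarith
            have hznn : 0 ≤ v j * (c j + dd k j) :=
              le_of_not_gt (fun hcon => hsne (hact0 k j hcon))
            have hexp : v j * (c j + dd k j) = v j * c j - lam k * s k j + v j * e k j := by
              rw [hdde]; linear_combination (lam k * s k j) * hopp'
            have habs : v j * e k j ≤ ε * ρ j := by
              calc v j * e k j ≤ |v j * e k j| := le_abs_self _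
                _ = |v j| * |e k j| := abs_mul _ _
                _ ≤ 1 * (ε * ρ j) := by rw [hvabs]; linarith [hsub k j]
                _ = ε * ρ j := one_mul _
            nlinarith [hznn, hexp, habs, h']
        linarith
    have hsum : ∑ k, (1 - v j * y k) * (lam k * s k j) ≤ (m:ℝ) * (2 * (ε * ρ j)) := by
      calc ∑ k, (1 - v j * y k) * (lam k * s k j) ≤ ∑ _k : Fin m, 2 * (ε * ρ j) :=
            Finset.sum_le_sum fun k _ => hterm k
        _ = (m:ℝ) * (2 * (ε * ρ j)) := by rw [Finset.sum_const]; simp [mul_comm]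
    have hlhs : ∑ k, (1 - v j * y k) * (lam k * s k j) = ρ j - v j * c j := by
      rw [hρ, hc, Finset.mul_sum, ← Finset.sum_sub_distrib]
      apply Finset.sum_congr rfl
      intro k _; ring
    rw [hlhs] at hsum
    have h2 : (m:ℝ) * (2 * (ε * ρ j)) ≤ ρ j / 2 := by nlinarith [hρ0 j, hεm]
    linarith [hρ0 j]
  -- expansion of the margin sum
  have hGexp : ∀ k, ∑ j, s k j * (c j + dd k j) =
      (∑ j, s k j * c j) + y k * (lam k * ∑ j, (s k j)^2) + (∑ j, s k j * e k j) := by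
    intro k
    have hj : ∀ j, s k j * (c j + dd k j)
        = s k j * c j + y k * (lam k * (s k j)^2) + s k j * e k j := by
      intro j; rw [hdde]; ring
    rw [Finset.sum_congr rfl (fun j _ => hj j), Finset.sum_add_distrib, Finset.sum_add_distrib,
      Finset.mul_sum, Finset.mul_sum]
  have hse : ∀ k, |∑ j, s k j * e k j| ≤ T := by
    intro k
    calc |∑ j, s k j * e k j| ≤ ∑ j, |s k j * e k j| := Finset.abs_sum_le_sum_abs _ _
      _ ≤ ∑ j, |e k j| := by
          apply Finset.sum_le_sum
          intro j _
          rw [abs_mul, abs_of_nonneg (hs0 k j)]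
          nlinarith [abs_nonneg (e k j), hs1 k j, hs0 k j]
      _ ≤ T := heT k
  -- existence of a fully active neuron
  have hssq : ∀ k, 0 < lam k → 1 ≤ ∑ j, (s k j)^2 := by
    intro k hk
    have h1 := heq k hk
    have hSig : ∑ j, s k j * (c j + dd k j) = y k := by
      have := congrArg (fun t => y k * t) h1
      simpa [← mul_assoc, hy2 k] using this
    have hSigne : ∑ j, s k j * (c j + dd k j) ≠ 0 := by
      rw [hSig]; rcases hy k with h | h <;> rw [h] <;> norm_num
    have hex : ∃ j, s k j * (c j + dd k j) ≠ 0 := by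
      by_contra hcon
      push_neg at hcon
      exact hSigne (Finset.sum_eq_zero fun j _ => hcon j)
    obtain ⟨j0, hj0⟩ := hex
    have hsne : s k j0 ≠ 0 := fun h => hj0 (by rw [h]; ring)
    have hcdne : c j0 + dd k j0 ≠ 0 := fun h => hj0 (by rw [h]; ring)
    have hvne : v j0 ≠ 0 := by
      intro h; have := hvabs j0; rw [h] at this; norm_num at this
    have hone : s k j0 = 1 := by
      rcases lt_trichotomy (v j0 * (c j0 + dd k j0)) 0 with hlt | heq0 | hgt
      · exact absurd (hact0 k j0 hlt) hsne
      · exact absurd (by rcases mul_eq_zero.mp heq0 with h | h; exact absurd h hvne; exact h) hcdne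
      · exact hact1 k j0 hgt
    calc (1:ℝ) = (s k j0)^2 := by rw [hone]; norm_num
      _ ≤ ∑ j, (s k j)^2 := Finset.single_le_sum (f := fun j => (s k j)^2)
          (fun j _ => sq_nonneg _) (mem_univ j0)
  -- sums of s*c
  have hscQ : ∀ k, y k = -1 → ∑ j, s k j * c j ≤ (∑ j, c j) + T := by
    intro k hyk
    have hj : ∀ j, s k j * c j ≤ c j + |e k j| := by
      intro j
      rcases hv j with hvj | hvj
      · have hc0 : 0 ≤ c j := by have := hcv j; rw [hvj] at this; linarith
        have := mul_le_of_le_one_left hc0 (hs1 k j)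
        linarith [abs_nonneg (e k j)]
      · have hc0 : c j ≤ 0 := by have := hcv j; rw [hvj] at this; linarith
        by_cases hone : s k j = 1
        · rw [hone]; linarith [abs_nonneg (e k j)]
        · have hle : v j * (c j + dd k j) ≤ 0 :=
            le_of_not_gt (fun h => hone (hact1 k j h))
          rw [hvj] at hle
          have hcd : 0 ≤ c j + dd k j := by linarith
          have hdd' : dd k j = -(lam k * s k j) + e k j := by rw [hdde, hyk]; ring
          have hnc : -(c j) ≤ |e k j| := by
            rw [hdd'] at hcd
            have : -(c j) ≤ e k j - lam k * s k j := by linarith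
            have h2 : e k j ≤ |e k j| := le_abs_self _
            nlinarith [mul_nonneg (hlam k) (hs0 k j)]
          have h1s : (0:ℝ) ≤ 1 - s k j := by linarith [hs1 k j]
          have hec : (0:ℝ) ≤ |e k j| + c j := by linarith
          have hp := mul_nonneg h1s hec
          have hq := mul_nonneg (hs0 k j) (abs_nonneg (e k j))
          nlinarith [hp, hq]
    calc ∑ j, s k j * c j ≤ ∑ j, (c j + |e k j|) := Finset.sum_le_sum fun j _ => hj j
      _ = (∑ j, c j) + ∑ j, |e k j| := Finset.sum_add_distrib
      _ ≤ (∑ j, c j) + T := by linarith [heT k]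
  set Cm : ℝ := ∑ j, (v j * c j - c j) / 2 with hCmdef
  have hCm0 : 0 ≤ Cm := by
    apply Finset.sum_nonneg; intro j _
    rcases hv j with h | h <;> rw [h] <;> nlinarith [hcv j, h]
  have hscP : ∀ k, y k = 1 → -Cm ≤ ∑ j, s k j * c j := by
    intro k _
    have hj : ∀ j, -(s k j * c j) ≤ (v j * c j - c j) / 2 := by
      intro j
      rcases hv j with hvj | hvj
      · have hc0 : 0 ≤ c j := by have := hcv j; rw [hvj] at this; linarith
        rw [hvj]
        nlinarith [mul_nonneg (hs0 k j) hc0]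
      · have hc0 : c j ≤ 0 := by have := hcv j; rw [hvj] at this; linarith
        rw [hvj]
        have := mul_le_of_le_one_left (by linarith : (0:ℝ) ≤ -(c j)) (hs1 k j)
        nlinarith
    have := Finset.sum_le_sum fun j (_ : j ∈ univ) => hj j
    rw [Finset.sum_neg_distrib] at this
    rw [hCmdef]
    linarith
  -- lambda bounds
  have hlsQ : ∀ k, y k = -1 → 0 < lam k →
      lam k * ∑ j, (s k j)^2 ≤ 1 + (∑ j, c j) + 2 * T := by
    intro k hyk hk
    have h1 := heq k hk
    rw [hGexp k, hyk] at h1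
    have h2 := hscQ k hyk
    have h3 : (∑ j, s k j * e k j) ≤ T := le_trans (le_abs_self _) (hse k)
    linarith
  have hlamQ : ∀ k, y k = -1 → lam k ≤ 5/4 + 2*T := by
    intro k hyk
    rcases (hlam k).eq_or_lt with hz | hz
    · linarith
    · have h1 : lam k * 1 ≤ lam k * ∑ j, (s k j)^2 :=
        mul_le_mul_of_nonneg_left (hssq k hz) (hlam k)
      have h2 := hlsQ k hyk hz
      linarith [hbias]
  have hlamP : ∀ k, y k = 1 → lam k ≤ 1 + Cm + T := by
    intro k hyk
    rcases (hlam k).eq_or_lt with hz | hz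
    · linarith [hCm0, hT0]
    · have h1 := heq k hz
      rw [hGexp k, hyk] at h1
      have h2 := hscP k hyk
      have h3 : -T ≤ ∑ j, s k j * e k j := by linarith [neg_abs_le (∑ j, s k j * e k j), hse k]
      have h4 : lam k * 1 ≤ lam k * ∑ j, (s k j)^2 :=
        mul_le_mul_of_nonneg_left (hssq k hz) (hlam k)
      linarith
  -- Cm bound
  have hNk : ∀ k, y k = -1 → ∑ j, ((1 - v j)/2) * (lam k * s k j) ≤ 5/4 + 3*T := by
    intro k hyk
    rcases (hlam k).eq_or_lt with hz | hz
    · have : ∑ j, ((1 - v j)/2) * (lam k * s k j) = 0 :=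
        Finset.sum_eq_zero fun j _ => by rw [← hz]; ring
      rw [this]; linarith
    · have hj : ∀ j, ((1 - v j)/2) * (lam k * s k j) ≤ lam k * (s k j)^2 + |e k j| := by
        intro j
        rcases hv j with hvj | hvj
        · rw [hvj]
          have := mul_nonneg (hlam k) (sq_nonneg (s k j))
          have := abs_nonneg (e k j)
          nlinarith
        · rw [hvj]
          by_cases hone : s k j = 1
          · rw [hone]; nlinarith [abs_nonneg (e k j)]
          · have hle : v j * (c j + dd k j) ≤ 0 :=
              le_of_not_gt (fun h => hone (hact1 k j h))
            rw [hvj] at hle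
            have hcd : 0 ≤ c j + dd k j := by linarith
            have hdd' : dd k j = -(lam k * s k j) + e k j := by rw [hdde, hyk]; ring
            have hc0 : c j ≤ 0 := by have := hcv j; rw [hvj] at this; linarith
            have hls : lam k * s k j ≤ |e k j| := by
              rw [hdd'] at hcd
              linarith [le_abs_self (e k j)]
            have := mul_nonneg (hlam k) (sq_nonneg (s k j))
            nlinarith
      calc ∑ j, ((1 - v j)/2) * (lam k * s k j)
          ≤ ∑ j, (lam k * (s k j)^2 + |e k j|) := Finset.sum_le_sum fun j _ => hj j
        _ = lam k * (∑ j, (s k j)^2) + ∑ j, |e k j| := by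
            rw [Finset.sum_add_distrib, Finset.mul_sum]
        _ ≤ (1 + (∑ j, c j) + 2*T) + T := by linarith [hlsQ k hyk hz, heT k]
        _ ≤ 5/4 + 3*T := by linarith [hbias]
  set mm : ℝ := ∑ k, (1 - y k)/2 with hmmdef
  set mp : ℝ := ∑ k, (1 + y k)/2 with hmpdef
  have hmm0 : 0 ≤ mm := by
    apply Finset.sum_nonneg; intro k _; rcases hy k with h | h <;> rw [h] <;> norm_num
  have hmp1 : 1 ≤ mp := by
    have h : (1 + y i)/2 ≤ ∑ k, (1 + y k)/2 := by
      apply Finset.single_le_sum _ (mem_univ i)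
      intro k _
      rcases hy k with h'|h' <;> rw [h'] <;> norm_num
    rw [hyi] at h
    norm_num at h
    rw [hmpdef]
    exact h
  have hmpm : mp + mm = m := by
    rw [hmpdef, hmmdef, ← Finset.sum_add_distrib]
    have : ∀ k : Fin m, (1 + y k)/2 + (1 - y k)/2 = 1 := fun k => by ring
    rw [Finset.sum_congr rfl (fun k _ => this k), Finset.sum_const]
    simp
  have hmmcase : mm = 0 ∨ 1 ≤ mm := by
    by_cases hex : ∃ k, y k = -1
    · right
      obtain ⟨k0, hk0⟩ := hex
      have h : (1 - y k0)/2 ≤ ∑ k, (1 - y k)/2 := by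
        apply Finset.single_le_sum _ (mem_univ k0)
        intro k _
        rcases hy k with h'|h' <;> rw [h'] <;> norm_num
      rw [hk0] at h
      norm_num at h
      rw [hmmdef]
      exact h
    · left
      push_neg at hex
      rw [hmmdef]
      apply Finset.sum_eq_zero
      intro k _
      have : y k = 1 := by rcases hy k with h|h; exact h; exact absurd h (hex k)
      rw [this]; ring
  have hCmb : Cm ≤ mm * (5/4 + 3*T) := by
    have hj : ∀ j, (v j * c j - c j)/2 ≤ ((1 - v j)/2) * (∑ k, ((1 - y k)/2) * (lam k * s k j)) := by
      intro j
      rcases hv j with hvj | hvj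
      · rw [hvj]
        have : 0 ≤ ∑ k, ((1 - y k)/2) * (lam k * s k j) :=
          Finset.sum_nonneg fun k _ => mul_nonneg
            (by rcases hy k with h|h <;> rw [h] <;> norm_num)
            (mul_nonneg (hlam k) (hs0 k j))
        nlinarith
      · rw [hvj]
        norm_num
        have hterm : ∀ k, -(lam k * y k * s k j) ≤ ((1 - y k)/2) * (lam k * s k j) := by
          intro k
          rcases hy k with h|h <;> rw [h] <;>
            nlinarith [mul_nonneg (hlam k) (hs0 k j)]
        have h1 : -(c j) ≤ ∑ k, ((1 - y k)/2) * (lam k * s k j) := by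
          rw [hc, ← Finset.sum_neg_distrib]
          exact Finset.sum_le_sum fun k _ => hterm k
        linarith
    have hswap : ∑ j, ((1 - v j)/2) * (∑ k, ((1 - y k)/2) * (lam k * s k j))
        = ∑ k, ((1 - y k)/2) * (∑ j, ((1 - v j)/2) * (lam k * s k j)) := by
      simp_rw [Finset.mul_sum]
      rw [Finset.sum_comm]
      exact Finset.sum_congr rfl fun k _ => Finset.sum_congr rfl fun j _ => by ring
    have hk : ∀ k, ((1 - y k)/2) * (∑ j, ((1 - v j)/2) * (lam k * s k j))
        ≤ ((1 - y k)/2) * (5/4 + 3*T) := by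
      intro k
      rcases hy k with h|h
      · rw [h]; norm_num
      · rw [h]; norm_num; linarith [hNk k h]
    calc Cm ≤ ∑ j, ((1 - v j)/2) * (∑ k, ((1 - y k)/2) * (lam k * s k j)) := by
          rw [hCmdef]; exact Finset.sum_le_sum fun j _ => hj j
      _ = ∑ k, ((1 - y k)/2) * (∑ j, ((1 - v j)/2) * (lam k * s k j)) := hswap
      _ ≤ ∑ k, ((1 - y k)/2) * (5/4 + 3*T) := Finset.sum_le_sum fun k _ => hk k
      _ = mm * (5/4 + 3*T) := by rw [hmmdef, Finset.sum_mul]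
  -- total lambda and S bound
  have hLam : ∑ k, lam k ≤ mp * (1 + Cm + T) + mm * (5/4 + 2*T) := by
    have hk : ∀ k, lam k ≤ ((1 + y k)/2) * (1 + Cm + T) + ((1 - y k)/2) * (5/4 + 2*T) := by
      intro k
      rcases hy k with h|h
      · rw [h]; norm_num; exact hlamP k h
      · rw [h]; norm_num; exact hlamQ k h
    calc ∑ k, lam k ≤ ∑ k, (((1 + y k)/2) * (1 + Cm + T) + ((1 - y k)/2) * (5/4 + 2*T)) :=
          Finset.sum_le_sum fun k _ => hk k
      _ = mp * (1 + Cm + T) + mm * (5/4 + 2*T) := by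
          rw [Finset.sum_add_distrib, hmpdef, hmmdef, Finset.sum_mul, Finset.sum_mul]
  have hSb : S ≤ n * ∑ k, lam k := by
    have h1 : S = ∑ k, lam k * (∑ j, s k j) := by
      rw [hS, hρ]
      rw [Finset.sum_comm]
      exact Finset.sum_congr rfl fun k _ => by rw [Finset.mul_sum]
    have h2 : ∀ k, lam k * (∑ j, s k j) ≤ lam k * n := by
      intro k
      apply mul_le_mul_of_nonneg_left _ (hlam k)
      calc ∑ j, s k j ≤ ∑ _j : Fin n, (1:ℝ) := Finset.sum_le_sum fun j _ => hs1 k j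
        _ = n := by simp
    rw [h1]
    calc ∑ k, lam k * (∑ j, s k j) ≤ ∑ k, lam k * n := Finset.sum_le_sum fun k _ => h2 k
      _ = n * ∑ k, lam k := by rw [← Finset.sum_mul]; ring
  -- T is small
  have hT12 : T ≤ 1/2 := by
    set a : ℝ := ε * n with hadef
    have ha0 : 0 ≤ a := mul_nonneg hε (by linarith)
    have ha4 : a * (4 * (m:ℝ)^2) ≤ 1 := by rw [hadef]; nlinarith [hεb]
    have hTa : T ≤ a * (mp * (1 + Cm + T) + mm * (5/4 + 2*T)) := by
      have h1 : S ≤ (n:ℝ) * (mp * (1 + Cm + T) + mm * (5/4 + 2*T)) := by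
        calc S ≤ (n:ℝ) * ∑ k, lam k := hSb
          _ ≤ (n:ℝ) * (mp * (1 + Cm + T) + mm * (5/4 + 2*T)) :=
              mul_le_mul_of_nonneg_left hLam (by linarith)
      calc T = ε * S := hT
        _ ≤ ε * ((n:ℝ) * (mp * (1 + Cm + T) + mm * (5/4 + 2*T))) :=
            mul_le_mul_of_nonneg_left h1 hε
        _ = a * (mp * (1 + Cm + T) + mm * (5/4 + 2*T)) := by rw [hadef]; ring
    have hmp0 : (0:ℝ) ≤ mp := by linarith
    rcases hmmcase with hmm | hmm
    · -- no negative samples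
      have hCm0' : Cm = 0 := by
        have := hCmb
        rw [hmm] at this
        linarith
      have hm0 : (0:ℝ) ≤ m := by linarith
      have hamp : a * mp ≤ 1/4 := by
        nlinarith [ha4, ha0, hmm, hmpm, hmp0, hm1,
          mul_nonneg (mul_nonneg ha0 hm0) (sub_nonneg.mpr hm1)]
      have h2 : a * (mp * (1 + Cm + T)) ≤ (1/4) * (1 + T) := by
        rw [hCm0']
        have h3 : (a * mp) * (1 + T) ≤ (1/4) * (1 + T) :=
          mul_le_mul_of_nonneg_right hamp (by linarith)
        nlinarith [h3]
      rw [hmm] at hTa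
      simp at hTa
      nlinarith [hTa, h2]
    · -- at least one negative sample
      have hm2 : (2:ℝ) ≤ m := by linarith [hmpm, hmp1]
      have hm0 : (0:ℝ) ≤ m := by linarith
      have ham : a * (m:ℝ) ≤ 1/8 := by
        nlinarith [ha4, ha0, hm2,
          mul_nonneg (mul_nonneg ha0 hm0) (by linarith : (0:ℝ) ≤ (m:ℝ) - 2)]
      have h1 : a * (mp * mm) ≤ 1/16 := by
        have hq : 4*(mp*mm) ≤ (m:ℝ)^2 := by nlinarith [sq_nonneg (mp - mm), hmpm]
        have hq2 := mul_le_mul_of_nonneg_left hq ha0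
        linarith [ha4, hq2]
      have h2 : a * mp + (5/4) * (a * mm) ≤ 5/32 := by nlinarith [ham, ha0, hmpm, hmm0, hmp0]
      have h3 : a * mp + 2 * (a * mm) ≤ 1/4 := by nlinarith [ham, ha0, hmpm, hmm0, hmp0]
      have hpc : (a * mp) * Cm ≤ (a * mp) * (mm * (5/4 + 3*T)) :=
        mul_le_mul_of_nonneg_left hCmb (mul_nonneg ha0 hmp0)
      have hq1 : (a * (mp * mm)) * T ≤ (1/16) * T := mul_le_mul_of_nonneg_right h1 hT0
      have hq2 : (a * mp + 2 * (a * mm)) * T ≤ (1/4) * T := mul_le_mul_of_nonneg_right h3 hT0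
      nlinarith [hTa, hpc, hq1, hq2, h1, h2]
  -- main chain
  have hMj : ∀ j, s i j * (c j + dd i j) ≤ c j + lam i * s i j + |e i j| := by
    intro j
    have hddi : dd i j = lam i * s i j + e i j := by rw [hdde, hyi]; ring
    have hub : c j + dd i j ≤ c j + lam i * s i j + |e i j| := by
      rw [hddi]; linarith [le_abs_self (e i j)]
    by_cases hcd : 0 ≤ c j + dd i j
    · have h1 := mul_le_of_le_one_left hcd (hs1 i j)
      linarith
    · push_neg at hcd
      rcases hv j with hvj | hvj
      · have h1 : s i j * (c j + dd i j) ≤ 0 := by nlinarith [hs0 i j]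
        have hc0 : 0 ≤ c j := by have := hcv j; rw [hvj] at this; linarith
        have h2 : 0 ≤ c j + lam i * s i j + |e i j| := by
          have := mul_nonneg (hlam i) (hs0 i j)
          linarith [abs_nonneg (e i j)]
        linarith
      · have hpos : 0 < v j * (c j + dd i j) := by rw [hvj]; linarith
        have hone := hact1 i j hpos
        rw [hone] at hub ⊢
        linarith
  have hmain : 1 ≤ (∑ j, c j) + lam i * n + T := by
    have h0 := hmarg i
    rw [hyi, one_mul] at h0
    have h1 : ∑ j, s i j * (c j + dd i j) ≤ ∑ j, (c j + lam i * s i j + |e i j|) :=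
      Finset.sum_le_sum fun j _ => hMj j
    have h2 : ∑ j, (c j + lam i * s i j + |e i j|)
        = (∑ j, c j) + lam i * (∑ j, s i j) + ∑ j, |e i j| := by
      rw [Finset.sum_add_distrib, Finset.sum_add_distrib, Finset.mul_sum]
    have h3 : lam i * (∑ j, s i j) ≤ lam i * n := by
      apply mul_le_mul_of_nonneg_left _ (hlam i)
      calc ∑ j, s i j ≤ ∑ _j : Fin n, (1:ℝ) := Finset.sum_le_sum fun j _ => hs1 i j
        _ = n := by simp
    linarith [heT i, h0]
  rw [div_le_iff₀ (by positivity : (0:ℝ) < 4 * n)]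
  nlinarith [hmain, hbias, hT12, hlam i]



set_option maxHeartbeats 1000000 in
/-- Lemma B.7: if the bias contribution is small then the multipliers of positive
samples are bounded below by 1/(4n). -/
theorem stmt16 {d m n : ℕ} (δ : ℝ) (hδ0 : 0 < δ) (hδ1 : δ < 1)
    (hn : Even n)
    (x : Fin m → EuclideanSpace ℝ (Fin d)) (y : Fin m → ℝ)
    (hx : ∀ i, ‖x i‖ = 1)
    (hy : ∀ i, y i = 1 ∨ y i = -1)
    (horth : ∀ i j, i ≠ j →
      |(inner ℝ (x i) (x j) : ℝ)| ≤ Real.sqrt (2 * Real.log (2 * (m : ℝ) ^ 2 / δ) / d))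
    (hd : 32 * (m : ℝ) ^ 4 * (n : ℝ) ^ 2 * Real.log (2 * (m : ℝ) ^ 2 / δ) ≤ (d : ℝ))
    (w : Fin n → EuclideanSpace ℝ (Fin d)) (b : Fin n → ℝ) (lam : Fin m → ℝ)
    (hkkt : IsKKTFixWith x y w b lam)
    (hbias : (∑ j ∈ Finset.univ.filter (fun j : Fin n => (j : ℕ) < n / 2), b j) -
        (∑ j ∈ Finset.univ.filter (fun j : Fin n => n / 2 ≤ (j : ℕ)), b j) ≤ 1 / 4) :
    ∀ i, y i = 1 → 1 / (4 * (n : ℝ)) ≤ lam i := by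
  obtain ⟨hfeas, hlam0, s, hs01, hsa1, hsa0, hwf, hbf, hcomp⟩ := hkkt
  intro i hyi
  -- n must be positive
  rcases Nat.eq_zero_or_pos n with rfl | hn1
  · exfalso
    have h := hfeas i
    simp [netF] at h
    linarith
  -- basic positivity facts
  have hm := i.pos
  have hmR : (1:ℝ) ≤ m := by exact_mod_cast hm
  have hnR : (1:ℝ) ≤ n := by exact_mod_cast hn1
  have hLg : 0 < Real.log (2 * (m : ℝ) ^ 2 / δ) := by
    apply Real.log_pos
    rw [lt_div_iff₀ hδ0]
    nlinarith
  have hd0 : (0:ℝ) < d := by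
    have hmp : (0:ℝ) < (m:ℝ) := by linarith
    have hnp : (0:ℝ) < (n:ℝ) := by linarith
    have h1 : (0:ℝ) < 32 * (m:ℝ)^4 * (n:ℝ)^2 * Real.log (2 * (m:ℝ)^2 / δ) :=
      mul_pos (mul_pos (mul_pos (by norm_num) (pow_pos hmp 4)) (pow_pos hnp 2)) hLg
    linarith [hd]
  set ε : ℝ := Real.sqrt (2 * Real.log (2 * (m : ℝ) ^ 2 / δ) / d) with hεdef
  have hε : 0 ≤ ε := Real.sqrt_nonneg _
  have hεb : ε * (4 * (m : ℝ) ^ 2 * n) ≤ 1 := by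
    have hε2 : ε ^ 2 = 2 * Real.log (2 * (m : ℝ) ^ 2 / δ) / d := by
      rw [hεdef]
      exact Real.sq_sqrt (by positivity)
    have hsq : (ε * (4 * (m:ℝ) ^ 2 * n)) ^ 2 ≤ 1 := by
      have h1 : ε ^ 2 * (16 * (m:ℝ)^4 * (n:ℝ)^2) ≤ 1 := by
        rw [hε2, div_mul_eq_mul_div, div_le_one hd0]
        nlinarith [hd]
      calc (ε * (4 * (m:ℝ) ^ 2 * n)) ^ 2 = ε ^ 2 * (16 * (m:ℝ)^4 * (n:ℝ)^2) := by ring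
        _ ≤ 1 := h1
    nlinarith [hsq, mul_nonneg hε (by positivity : (0:ℝ) ≤ 4 * (m:ℝ) ^ 2 * n),
      sq_nonneg (ε * (4 * (m:ℝ) ^ 2 * n) - 1)]
  -- sign vector facts
  have hv' : ∀ j : Fin n, vsign n j = 1 ∨ vsign n j = -1 := by
    intro j; unfold vsign; split <;> simp
  -- preactivation identity
  have hz : ∀ (i' : Fin m) (j : Fin n), (inner ℝ (w j) (x i') : ℝ) + b j
      = vsign n j * ((∑ k, lam k * y k * s k j)
          + ∑ k, lam k * y k * s k j * (inner ℝ (x k) (x i') : ℝ)) := by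
    intro i' j
    rw [hwf j, hbf j, real_inner_smul_left, sum_inner]
    simp_rw [real_inner_smul_left]
    ring
  -- activation rules in reduced form
  have hact1' : ∀ (i' : Fin m) (j : Fin n),
      0 < vsign n j * ((∑ k, lam k * y k * s k j) + (∑ k, lam k * y k * s k j * (inner ℝ (x k) (x i') : ℝ))) → s i' j = 1 :=
    fun i' j h => hsa1 i' j (by rw [hz i' j]; exact h)
  have hact0' : ∀ (i' : Fin m) (j : Fin n),
      vsign n j * ((∑ k, lam k * y k * s k j) + (∑ k, lam k * y k * s k j * (inner ℝ (x k) (x i') : ℝ))) < 0 → s i' j = 0 :=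
    fun i' j h => hsa0 i' j (by rw [hz i' j]; exact h)
  -- network in reduced form
  have hjj : ∀ (i' : Fin m) (j : Fin n),
      vsign n j * relu ((inner ℝ (w j) (x i') : ℝ) + b j)
        = s i' j * ((∑ k, lam k * y k * s k j) + (∑ k, lam k * y k * s k j * (inner ℝ (x k) (x i') : ℝ))) := by
    intro i' j
    rw [hz i' j]
    set t : ℝ := (∑ k, lam k * y k * s k j) + (∑ k, lam k * y k * s k j * (inner ℝ (x k) (x i') : ℝ)) with ht
    rcases hv' j with hvj | hvj
    · rw [hvj, one_mul, one_mul]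
      unfold relu
      rcases lt_trichotomy t 0 with hlt | h0 | hgt
      · rw [hact0' i' j (by rw [hvj, one_mul]; exact hlt), max_eq_right (le_of_lt hlt)]
        ring
      · rw [h0]; simp
      · rw [hact1' i' j (by rw [hvj, one_mul]; exact hgt), max_eq_left (le_of_lt hgt)]
        ring
    · rw [hvj]
      unfold relu
      rcases lt_trichotomy t 0 with hlt | h0 | hgt
      · rw [hact1' i' j (by rw [hvj]; linarith)]
        rw [max_eq_left (by linarith : (0:ℝ) ≤ -1 * t)]
        ring
      · rw [h0]; simp
      · rw [hact0' i' j (by rw [hvj]; linarith)]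
        rw [max_eq_right (by linarith : -1 * t ≤ (0:ℝ))]
        ring
  have hnet : ∀ i' : Fin m, netF w b (x i')
      = ∑ j, s i' j * ((∑ k, lam k * y k * s k j) + (∑ k, lam k * y k * s k j * (inner ℝ (x k) (x i') : ℝ))) := by
    intro i'
    unfold netF
    exact Finset.sum_congr rfl fun j _ => hjj i' j
  -- margin and complementarity in reduced form
  have hmarg : ∀ i' : Fin m, 1 ≤ y i' * ∑ j, s i' j * ((∑ k, lam k * y k * s k j) + (∑ k, lam k * y k * s k j * (inner ℝ (x k) (x i') : ℝ))) := by
    intro i'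
    rw [← hnet i']
    exact hfeas i'
  have heqr : ∀ i' : Fin m, 0 < lam i' → y i' * ∑ j, s i' j * ((∑ k, lam k * y k * s k j) + (∑ k, lam k * y k * s k j * (inner ℝ (x k) (x i') : ℝ))) = 1 := by
    intro i' hpos
    have h := hcomp i'
    rcases mul_eq_zero.mp h with h' | h'
    · exact absurd h' (ne_of_gt hpos)
    · rw [← hnet i']
      linarith [h']
  -- bias hypothesis in reduced form
  have hbias' : (∑ j, ∑ k, lam k * y k * s k j) ≤ 1 / 4 := by
    have hsplit := Finset.sum_filter_add_sum_filter_not (Finset.univ : Finset (Fin n))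
      (fun j : Fin n => (j : ℕ) < n / 2) (fun j => ∑ k, lam k * y k * s k j)
    have h1 : ∀ j ∈ Finset.univ.filter (fun j : Fin n => (j : ℕ) < n / 2),
        (∑ k, lam k * y k * s k j) = b j := by
      intro j hj
      rw [hbf j]
      unfold vsign
      rw [if_pos (Finset.mem_filter.mp hj).2, one_mul]
    have h2 : ∀ j ∈ Finset.univ.filter (fun j : Fin n => ¬ ((j : ℕ) < n / 2)),
        (∑ k, lam k * y k * s k j) = -(b j) := by
      intro j hj
      rw [hbf j]
      unfold vsign
      rw [if_neg (Finset.mem_filter.mp hj).2]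
      ring
    have h3 : Finset.univ.filter (fun j : Fin n => ¬ ((j : ℕ) < n / 2))
        = Finset.univ.filter (fun j : Fin n => n / 2 ≤ (j : ℕ)) := by
      apply Finset.filter_congr
      intro j _
      simp [Nat.not_lt]
    calc ∑ j, ∑ k, lam k * y k * s k j
        = (∑ j ∈ Finset.univ.filter (fun j : Fin n => (j : ℕ) < n / 2),
            ∑ k, lam k * y k * s k j)
          + ∑ j ∈ Finset.univ.filter (fun j : Fin n => ¬ ((j : ℕ) < n / 2)),
            ∑ k, lam k * y k * s k j := hsplit.symm
      _ = (∑ j ∈ Finset.univ.filter (fun j : Fin n => (j : ℕ) < n / 2), b j)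
          + ∑ j ∈ Finset.univ.filter (fun j : Fin n => ¬ ((j : ℕ) < n / 2)), -(b j) := by
          rw [Finset.sum_congr rfl h1, Finset.sum_congr rfl h2]
      _ = (∑ j ∈ Finset.univ.filter (fun j : Fin n => (j : ℕ) < n / 2), b j)
          - ∑ j ∈ Finset.univ.filter (fun j : Fin n => n / 2 ≤ (j : ℕ)), b j := by
          rw [h3, Finset.sum_neg_distrib]
          ring
      _ ≤ 1 / 4 := hbias
  exact key16 ε hε y lam (vsign n) s (fun k l => (inner ℝ (x k) (x l) : ℝ))
    (fun j => ∑ k, lam k * y k * s k j)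
    (fun i' j => ∑ k, lam k * y k * s k j * (inner ℝ (x k) (x i') : ℝ))
    hy hlam0 hv' (fun k j => (hs01 k j).1) (fun k j => (hs01 k j).2)
    (fun k => by show (inner ℝ (x k) (x k) : ℝ) = 1; rw [real_inner_self_eq_norm_sq, hx k]; norm_num)
    (fun k l hkl => horth k l hkl)
    (fun j => rfl) (fun i' j => rfl) hεb hact1' hact0' hmarg heqr hbias' i hyi hn1
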